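/- Let x_1, ..., x_{m+1} be points in R^{n+1} such that |x_i - x_{i+1}| ≤ K̂ (1 + |x_i|)^{-1} for all 1 ≤ i ≤ m, where K̂ ≥ 0. Then |x_1 - x_{m+1}| ≤ ((K̂+1)^m - 1)(1 + |x_1|)^{-1}. -/

import Mathlib

lemma aux_distortion (Khat : ℝ) (hK : 0 ≤ Khat) {E : Type*} [NormedAddCommGroup E] :
    ∀ (m : ℕ) (x : Fin (m + 1) → E),
      (∀ i : Fin m, ‖x i.castSucc - x i.succ‖ ≤ Khat * (1 + ‖x i.castSucc‖)⁻¹) →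
      ‖x 0 - x (Fin.last m)‖ ≤ ((Khat + 1) ^ m - 1) * (1 + ‖x 0‖)⁻¹ := by
  intro m
  induction m with
  | zero => intro x _; simp
  | succ m ih =>
    intro x hx
    set w : Fin (m + 2) := (Fin.last m).castSucc with hw
    have ha : (1 : ℝ) ≤ 1 + ‖x 0‖ := by linarith [norm_nonneg (x 0)]
    have hb : (1 : ℝ) ≤ 1 + ‖x w‖ := by linarith [norm_nonneg (x w)]
    set a : ℝ := 1 + ‖x 0‖ with hadef
    set b : ℝ := 1 + ‖x w‖ with hbdef
    have hc : (1 : ℝ) ≤ (Khat + 1) ^ m := one_le_pow₀ (by linarith)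
    set c : ℝ := (Khat + 1) ^ m with hcdef
    have ha0 : (0 : ℝ) < a := by linarith
    have hb0 : (0 : ℝ) < b := by linarith
    have hainv : a * a⁻¹ = 1 := mul_inv_cancel₀ (by linarith)
    have hIH : ‖x 0 - x w‖ ≤ (c - 1) * a⁻¹ := by
      have := ih (fun i => x i.castSucc)
        (fun i => by simpa only [Fin.succ_castSucc] using hx i.castSucc)
      simpa [hw, hadef, hcdef] using this
    have hstep : ‖x w - x (Fin.last (m + 1))‖ ≤ Khat * b⁻¹ := by
      simpa [hw, hbdef, Fin.succ_last] using hx (Fin.last m)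
    have htri : ‖x 0 - x (Fin.last (m + 1))‖ ≤ ‖x 0 - x w‖ + ‖x w - x (Fin.last (m + 1))‖ :=
      norm_sub_le_norm_sub_add_norm_sub _ _ _
    have hb2 : a - ‖x 0 - x w‖ ≤ b := by
      have := norm_sub_norm_le (x 0) (x w)
      simp only [hadef, hbdef]
      linarith
    have key : a ≤ c * b := by
      rcases le_or_gt (a ^ 2) c with h1 | h1
      · nlinarith
      · nlinarith [hainv, hIH, hb2, norm_nonneg (x 0 - x w)]
    have hbinv' : b⁻¹ ≤ c * a⁻¹ := by
      have h2 : (1 : ℝ) / b ≤ c / a := (div_le_div_iff₀ hb0 ha0).mpr (by linarith)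
      simpa [one_div, div_eq_mul_inv] using h2
    have hfin : Khat * b⁻¹ ≤ Khat * c * a⁻¹ := by
      calc Khat * b⁻¹ ≤ Khat * (c * a⁻¹) := mul_le_mul_of_nonneg_left hbinv' hK
        _ = Khat * c * a⁻¹ := by ring
    have hrhs : ((Khat + 1) ^ (m + 1) - 1) * a⁻¹ = (c - 1) * a⁻¹ + Khat * c * a⁻¹ := by
      rw [pow_succ, ← hcdef]; ring
    rw [hrhs]
    linarith

/-- **Lemma 5.1 (distortion lemma).** If `x₁, …, x_{m+1}` are points in `ℝ^{n+1}` with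
`‖xᵢ - x_{i+1}‖ ≤ K̂ (1 + ‖xᵢ‖)⁻¹` for `1 ≤ i ≤ m` and `K̂ ≥ 0`, then
`‖x₁ - x_{m+1}‖ ≤ ((K̂+1)^m - 1)(1 + ‖x₁‖)⁻¹`. -/
theorem stmt0 (n m : ℕ) (Khat : ℝ) (hK : 0 ≤ Khat)
    (x : Fin (m + 1) → EuclideanSpace ℝ (Fin (n + 1)))
    (h : ∀ i : Fin m, ‖x i.castSucc - x i.succ‖ ≤ Khat * (1 + ‖x i.castSucc‖)⁻¹) :
    ‖x 0 - x (Fin.last m)‖ ≤ ((Khat + 1) ^ m - 1) * (1 + ‖x 0‖)⁻¹ :=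
  aux_distortion Khat hK m x h
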